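/- Let E = ℂ and F = ℝ with complex conjugation. Every g ∈ GL_n(ℂ) with g ḡ = I_n can be written g = h h̄⁻¹ for some h ∈ GL_n(ℂ). -/
import Mathlib

open Polynomial Matrix

/-- Hilbert 90 for `GLₙ(ℂ)/GLₙ(ℝ)`: every `g ∈ GLₙ(ℂ)` with
`g ḡ = I` can be written as `g = h h̄⁻¹` for some `h ∈ GLₙ(ℂ)`. -/
theorem hilbert_90_gl_complex
    (n : ℕ) (g : Matrix (Fin n) (Fin n) ℂ) (hg : IsUnit g.det)
    (hcocycle : g * g.map (starRingEnd ℂ) = 1) :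
    ∃ h : Matrix (Fin n) (Fin n) ℂ, IsUnit h.det ∧
      g = h * (h.map (starRingEnd ℂ))⁻¹ := by
  -- the polynomial q(X) = det((1 + i X)•1 + (1 - i X)•g)
  set q : ℂ[X] :=
    ((C 1 + C Complex.I * X) • (1 : Matrix (Fin n) (Fin n) ℂ[X])
      + (C 1 - C Complex.I * X) • g.map C).det with hq
  have heval : ∀ t : ℂ, q.eval t =
      ((1 + Complex.I * t) • (1 : Matrix (Fin n) (Fin n) ℂ)
        + (1 - Complex.I * t) • g).det := by
    intro t
    show (evalRingHom t) q = _
    rw [hq, RingHom.map_det, RingHom.mapMatrix_apply]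
    congr 1
    ext i j
    simp [Matrix.one_apply, Matrix.add_apply, Matrix.smul_apply, Matrix.map_apply,
      apply_ite (eval t)]
  have hq0 : q ≠ 0 := by
    intro h0
    have := heval Complex.I
    rw [h0] at this
    simp [Complex.I_mul_I] at this
    exact hg.ne_zero this
  -- find a real t that is not a root
  have hfin : Set.Finite {x : ℂ | q.IsRoot x} := Polynomial.finite_setOf_isRoot hq0
  have : ¬ (Set.range (Complex.ofReal) ⊆ {x : ℂ | q.IsRoot x}) := by
    intro hsub
    exact Set.infinite_range_of_injective Complex.ofReal_injective (hfin.subset hsub)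
  obtain ⟨z, ⟨t, rfl⟩, hz⟩ := Set.not_subset.mp this
  -- define h
  set h : Matrix (Fin n) (Fin n) ℂ :=
    (1 + Complex.I * t) • (1 : Matrix (Fin n) (Fin n) ℂ)
      + (1 - Complex.I * t) • g with hh
  have hdet : h.det ≠ 0 := by rw [← heval]; exact hz
  have hdetu : IsUnit h.det := isUnit_iff_ne_zero.mpr hdet
  -- conjugate of h
  have hconj : h.map (starRingEnd ℂ) =
      (1 - Complex.I * t) • (1 : Matrix (Fin n) (Fin n) ℂ)
        + (1 + Complex.I * t) • g.map (starRingEnd ℂ) := by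
    ext i j
    simp [hh, Matrix.add_apply, Matrix.smul_apply, Matrix.map_apply, Matrix.one_apply,
      apply_ite (starRingEnd ℂ), sub_eq_add_neg]
  have key : g * h.map (starRingEnd ℂ) = h := by
    rw [hconj, hh]
    rw [Matrix.mul_add, Matrix.mul_smul, Matrix.mul_smul, hcocycle, Matrix.mul_one]
    abel
  have hdetconj : IsUnit (h.map (starRingEnd ℂ)).det := by
    rw [← RingHom.mapMatrix_apply, ← RingHom.map_det]
    exact isUnit_iff_ne_zero.mpr (by simpa using hdet)
  refine ⟨h, hdetu, ?_⟩
  calc g = g * (h.map (starRingEnd ℂ) * (h.map (starRingEnd ℂ))⁻¹) := by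
            rw [Matrix.mul_nonsing_inv _ hdetconj, Matrix.mul_one]
    _ = h * (h.map (starRingEnd ℂ))⁻¹ := by rw [← Matrix.mul_assoc, key]
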